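/- Let h be a good(δ̄, N_δ̄) bijection and define S₂ := { i ∈ {1,…,N} : |i − h(i)| ≤ δ̄ }. Then for every integer k: E[ |â_k − ã_k|² ] ≤ 4·N_δ̄/N + (1/N)·Σ_{i ∈ S₂} E[ |g(t_{h(i)}) − g(t_i)|² ]. -/

import Mathlib

open MeasureTheory ProbabilityTheory Finset

noncomputable section

/-- `t` is the vector of order statistics of `N` i.i.d. samples from the uniform
distribution on the interval `[0, b]`: there exist i.i.d. random variables `u i`,
each uniformly distributed on `[0, b]`, such that for every `ω` the vector
`(t i ω)_i` is the monotone rearrangement of `(u i ω)_i`. -/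
def IsUniformOrderStats {Ω : Type*} [MeasurableSpace Ω] (μ : Measure Ω) (b : ℝ)
    {N : ℕ} (t : Fin N → Ω → ℝ) : Prop :=
  ∃ u : Fin N → Ω → ℝ,
    (∀ i, Measurable (u i)) ∧
    iIndepFun u μ ∧
    (∀ i, Measure.map (u i) μ = (ENNReal.ofReal b)⁻¹ • volume.restrict (Set.Icc 0 b)) ∧
    ∀ ω, Monotone (fun i => t i ω) ∧ ∃ σ : Equiv.Perm (Fin N), ∀ i, t i ω = u (σ i) ω

/-- A permutation `h` of `{1, …, N}` is `good(δ, Nδ)` if at most `Nδ` indices are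
moved by more than `δ`. -/
def GoodPerm {N : ℕ} (δ Nδ : ℕ) (h : Equiv.Perm (Fin N)) : Prop :=
  (Finset.univ.filter fun i : Fin N => (δ : ℤ) < |(i.1 : ℤ) - ((h i).1 : ℤ)|).card ≤ Nδ

/-- The estimated `k`-th Fourier series coefficient from samples `s 1, …, s N`
(nominally placed at locations `i/N`): `(1/N) ∑_{i=1}^N s i · e^{-2πjki/N}`. -/
def dftCoeff (N : ℕ) (s : Fin N → ℂ) (k : ℤ) : ℂ :=
  (N : ℂ)⁻¹ * ∑ i : Fin N, s i *
    Complex.exp (-(2 * (Real.pi : ℂ) * Complex.I * (k : ℂ) * ((i.1 : ℂ) + 1) / (N : ℂ)))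


lemma my_measurable_inf' {δ α ι : Type*} [MeasurableSpace δ] [SemilatticeInf α]
    [MeasurableSpace α] [MeasurableInf₂ α] {s : Finset ι} (hs : s.Nonempty) {f : ι → δ → α}
    (hf : ∀ n ∈ s, Measurable (f n)) : Measurable (s.inf' hs f) :=
  Finset.inf'_induction hs _ (fun _f hf _g hg => hf.inf hg) fun n hn => hf n hn

/-- sorted value = min over (i+1)-subsets of max. -/
lemma sorted_eq_minmax {N : ℕ} (v x : Fin N → ℝ) (σ : Equiv.Perm (Fin N))
    (hmono : Monotone v) (hperm : ∀ i, v i = x (σ i)) (i : Fin N) :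
    v i = ((Finset.univ.powersetCard (i.1 + 1)).attach.inf'
      (Finset.attach_nonempty_iff.mpr
        (Finset.powersetCard_nonempty.mpr (by simpa using Nat.succ_le_of_lt i.2)))
      (fun s => s.1.sup'
        (Finset.card_pos.mp (by rw [(Finset.mem_powersetCard_univ).mp s.2]; omega)) x)) := by
  apply le_antisymm
  · -- v i ≤ every sup
    apply Finset.le_inf'
    rintro ⟨s, hs⟩ -
    have hcard : s.card = i.1 + 1 := Finset.mem_powersetCard_univ.mp hs
    -- find l with i ≤ l and σ l ∈ s
    have : ∃ l ∈ s.image σ.symm, i ≤ l := by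
      by_contra hcon
      push_neg at hcon
      have hsub : s.image σ.symm ⊆ Finset.Iio i := fun l hl =>
        Finset.mem_Iio.mpr (lt_of_not_ge fun hle => absurd (hcon l hl) (not_lt.mpr hle))
      have := Finset.card_le_card hsub
      rw [Finset.card_image_of_injective _ σ.symm.injective, hcard, Fin.card_Iio] at this
      omega
    obtain ⟨l, hl, hil⟩ := this
    obtain ⟨j, hj, rfl⟩ := Finset.mem_image.mp hl
    calc v i ≤ v (σ.symm j) := hmono hil
    _ = x (σ (σ.symm j)) := hperm _
    _ = x j := by rw [Equiv.apply_symm_apply]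
    _ ≤ _ := Finset.le_sup' _ hj
  · -- inf ≤ v i, witness: image of Iic i under σ
    have hmem : (Finset.Iic i).image σ ∈ Finset.univ.powersetCard (i.1 + 1) := by
      rw [Finset.mem_powersetCard_univ, Finset.card_image_of_injective _ σ.injective,
        Fin.card_Iic]
    refine le_trans (Finset.inf'_le _ (Finset.mem_attach _ ⟨_, hmem⟩)) ?_
    apply Finset.sup'_le
    intro j hj
    obtain ⟨l, hl, rfl⟩ := Finset.mem_image.mp hj
    rw [← hperm l]
    exact hmono (Finset.mem_Iic.mp hl)

lemma measurable_of_orderStats {Ω : Type*} [MeasurableSpace Ω] (μ : Measure Ω) (b : ℝ)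
    {N : ℕ} (t : Fin N → Ω → ℝ) (hord : IsUniformOrderStats μ b t) (i : Fin N) :
    Measurable (t i) := by
  obtain ⟨u, hum, -, -, hsort⟩ := hord
  have heq : t i = fun ω => ((Finset.univ.powersetCard (i.1 + 1)).attach.inf'
      (Finset.attach_nonempty_iff.mpr
        (Finset.powersetCard_nonempty.mpr (by simpa using Nat.succ_le_of_lt i.2)))
      (fun s => s.1.sup'
        (Finset.card_pos.mp (by rw [(Finset.mem_powersetCard_univ).mp s.2]; omega))
        (fun j => u j ω))) := by
    funext ω
    obtain ⟨hmono, σ, hσ⟩ := hsort ω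
    exact sorted_eq_minmax (fun j => t j ω) (fun j => u j ω) σ hmono hσ i
  rw [heq]
  have : Measurable ((Finset.univ.powersetCard (i.1 + 1)).attach.inf'
      (Finset.attach_nonempty_iff.mpr
        (Finset.powersetCard_nonempty.mpr (by simpa using Nat.succ_le_of_lt i.2)))
      (fun s => (s.1.sup'
        (Finset.card_pos.mp (by rw [(Finset.mem_powersetCard_univ).mp s.2]; omega))
        u))) := by
    apply my_measurable_inf'
    intro s _
    exact Finset.measurable_sup' _ (fun j _ => hum j)
  convert this using 1
  funext ω
  rw [Finset.inf'_apply]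
  congr 1
  funext s
  rw [Finset.sup'_apply]

/-- For a `good(δ̄, N_δ̄)` permutation `h` and
`S₂ = {i : |i − h(i)| ≤ δ̄}`, for every integer `k`,
`E[|â_k − ã_k|²] ≤ 4 N_δ̄/N + (1/N) ∑_{i ∈ S₂} E[|g(t_{h(i)}) − g(t_i)|²]`. -/
theorem misordering_coefficient_bound (N : ℕ) (Ω : Type) [MeasurableSpace Ω]
    (μ : Measure Ω) [IsProbabilityMeasure μ] (t : Fin N → Ω → ℝ) (g : ℝ → ℂ)
    (h : Equiv.Perm (Fin N)) (δ Nδ : ℕ)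
    (hord : IsUniformOrderStats μ 1 t)
    (hgm : Measurable g)
    (hbd : ∀ x : ℝ, ‖g x‖ < 1)
    (hgood : GoodPerm δ Nδ h) :
    ∀ k : ℤ,
      (∫ ω, ‖dftCoeff N (fun i => g (t i ω)) k
          - dftCoeff N (fun i => g (t (h i) ω)) k‖ ^ 2 ∂μ)
        ≤ 4 * (Nδ : ℝ) / N + (1 / (N : ℝ)) *
            ∑ i ∈ Finset.univ.filter
              (fun i : Fin N => |(i.1 : ℤ) - ((h i).1 : ℤ)| ≤ (δ : ℤ)),
              ∫ ω, ‖g (t (h i) ω) - g (t i ω)‖ ^ 2 ∂μ := by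
  intro k
  rcases Nat.eq_zero_or_pos N with hN | hN
  · subst hN
    simp [dftCoeff]
  have hNR : (0:ℝ) < N := by exact_mod_cast hN
  have hNne : (N:ℝ) ≠ 0 := ne_of_gt hNR
  have hmt : ∀ i, Measurable (t i) := measurable_of_orderStats μ 1 t hord
  set c : Fin N → Ω → ℂ := fun i ω => g (t i ω) - g (t (h i) ω) with hc
  have hcm : ∀ i, Measurable fun ω => ‖c i ω‖ ^ 2 := fun i =>
    (((hgm.comp (hmt i)).sub (hgm.comp (hmt (h i)))).norm).pow_const 2
  have hcbd : ∀ i ω, ‖c i ω‖ ^ 2 ≤ 4 := by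
    intro i ω
    have h1 : ‖c i ω‖ ≤ 2 := by
      calc ‖c i ω‖ ≤ ‖g (t i ω)‖ + ‖g (t (h i) ω)‖ := norm_sub_le _ _
        _ ≤ 2 := by linarith [(hbd (t i ω)).le, (hbd (t (h i) ω)).le]
    nlinarith [norm_nonneg (c i ω)]
  have hci : ∀ i, Integrable (fun ω => ‖c i ω‖ ^ 2) μ := fun i =>
    (integrable_const (4:ℝ)).mono' (hcm i).aestronglyMeasurable
      (ae_of_all _ fun ω => by
        rw [Real.norm_eq_abs, abs_of_nonneg (by positivity)]; exact hcbd i ω)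
  -- pointwise Cauchy–Schwarz bound
  have key : ∀ ω, ‖dftCoeff N (fun i => g (t i ω)) k
      - dftCoeff N (fun i => g (t (h i) ω)) k‖ ^ 2
      ≤ (1 / (N:ℝ)) * ∑ i : Fin N, ‖c i ω‖ ^ 2 := by
    intro ω
    have hdiff : dftCoeff N (fun i => g (t i ω)) k - dftCoeff N (fun i => g (t (h i) ω)) k
        = (N : ℂ)⁻¹ * ∑ i : Fin N, c i ω *
          Complex.exp (-(2 * (Real.pi : ℂ) * Complex.I * (k : ℂ) * ((i.1 : ℂ) + 1) / (N : ℂ))) := by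
      rw [dftCoeff, dftCoeff, ← mul_sub, ← Finset.sum_sub_distrib]
      congr 1
      exact Finset.sum_congr rfl fun i _ => by rw [hc]; ring
    have he : ∀ i : Fin N,
        ‖Complex.exp (-(2 * (Real.pi : ℂ) * Complex.I * (k : ℂ) * ((i.1 : ℂ) + 1) / (N : ℂ)))‖ = 1 := by
      intro i
      have hz : (-(2 * (Real.pi : ℂ) * Complex.I * (k : ℂ) * ((i.1 : ℂ) + 1) / (N : ℂ)))
          = ((-(2 * Real.pi * (k : ℝ) * ((i.1 : ℝ) + 1) / N) : ℝ) : ℂ) * Complex.I := by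
        push_cast; ring
      rw [hz, Complex.norm_exp_ofReal_mul_I]
    have h1 : ‖dftCoeff N (fun i => g (t i ω)) k - dftCoeff N (fun i => g (t (h i) ω)) k‖
        ≤ (1 / (N:ℝ)) * ∑ i : Fin N, ‖c i ω‖ := by
      rw [hdiff, norm_mul, norm_inv, Complex.norm_natCast, ← one_div]
      gcongr
      calc ‖∑ i : Fin N, c i ω * Complex.exp
            (-(2 * (Real.pi : ℂ) * Complex.I * (k : ℂ) * ((i.1 : ℂ) + 1) / (N : ℂ)))‖
          ≤ ∑ i : Fin N, ‖c i ω * Complex.exp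
            (-(2 * (Real.pi : ℂ) * Complex.I * (k : ℂ) * ((i.1 : ℂ) + 1) / (N : ℂ)))‖ :=
          norm_sum_le _ _
        _ = ∑ i : Fin N, ‖c i ω‖ := by
          refine Finset.sum_congr rfl fun i _ => ?_
          rw [norm_mul, he i, mul_one]
    have h2 : (∑ i : Fin N, ‖c i ω‖) ^ 2 ≤ N * ∑ i : Fin N, ‖c i ω‖ ^ 2 := by
      have := sq_sum_le_card_mul_sum_sq (s := (Finset.univ : Finset (Fin N)))
        (f := fun i => ‖c i ω‖)
      simpa using this
    calc ‖dftCoeff N (fun i => g (t i ω)) k - dftCoeff N (fun i => g (t (h i) ω)) k‖ ^ 2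
        ≤ ((1 / (N:ℝ)) * ∑ i : Fin N, ‖c i ω‖) ^ 2 := by
          apply pow_le_pow_left₀ (norm_nonneg _) h1
      _ = (1 / (N:ℝ)) ^ 2 * (∑ i : Fin N, ‖c i ω‖) ^ 2 := by ring
      _ ≤ (1 / (N:ℝ)) ^ 2 * (N * ∑ i : Fin N, ‖c i ω‖ ^ 2) := by
          apply mul_le_mul_of_nonneg_left h2 (by positivity)
      _ = (1 / (N:ℝ)) * ∑ i : Fin N, ‖c i ω‖ ^ 2 := by
          field_simp; try ring
  -- measurability / integrability of both sides
  have hdm1 : Measurable (fun ω => dftCoeff N (fun i => g (t i ω)) k) := by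
    unfold dftCoeff
    exact measurable_const.mul
      (Finset.measurable_sum _ fun i _ => ((hgm.comp (hmt i)).mul_const _))
  have hdm2 : Measurable (fun ω => dftCoeff N (fun i => g (t (h i) ω)) k) := by
    unfold dftCoeff
    exact measurable_const.mul
      (Finset.measurable_sum _ fun i _ => ((hgm.comp (hmt (h i))).mul_const _))
  have hGbd : ∀ ω, (1 / (N:ℝ)) * ∑ i : Fin N, ‖c i ω‖ ^ 2 ≤ 4 := by
    intro ω
    have hsum : ∑ i : Fin N, ‖c i ω‖ ^ 2 ≤ (N:ℝ) * 4 := by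
      calc ∑ i : Fin N, ‖c i ω‖ ^ 2 ≤ ∑ _i : Fin N, (4:ℝ) :=
          Finset.sum_le_sum fun i _ => hcbd i ω
        _ = (N:ℝ) * 4 := by simp [mul_comm]
    calc (1 / (N:ℝ)) * ∑ i : Fin N, ‖c i ω‖ ^ 2 ≤ (1 / (N:ℝ)) * ((N:ℝ) * 4) :=
        mul_le_mul_of_nonneg_left hsum (by positivity)
      _ = 4 := by field_simp; try ring
  have hFi : Integrable (fun ω => ‖dftCoeff N (fun i => g (t i ω)) k
      - dftCoeff N (fun i => g (t (h i) ω)) k‖ ^ 2) μ := by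
    refine (integrable_const (4:ℝ)).mono'
      (((hdm1.sub hdm2).norm).pow_const 2).aestronglyMeasurable (ae_of_all _ fun ω => ?_)
    rw [Real.norm_eq_abs, abs_of_nonneg (by positivity)]
    exact le_trans (key ω) (hGbd ω)
  have hGi : Integrable (fun ω => (1 / (N:ℝ)) * ∑ i : Fin N, ‖c i ω‖ ^ 2) μ :=
    (integrable_finset_sum _ fun i _ => hci i).const_mul _
  -- integrate
  have hmain : (∫ ω, ‖dftCoeff N (fun i => g (t i ω)) k
      - dftCoeff N (fun i => g (t (h i) ω)) k‖ ^ 2 ∂μ)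
      ≤ (1 / (N:ℝ)) * ∑ i : Fin N, ∫ ω, ‖c i ω‖ ^ 2 ∂μ := by
    calc (∫ ω, ‖dftCoeff N (fun i => g (t i ω)) k
        - dftCoeff N (fun i => g (t (h i) ω)) k‖ ^ 2 ∂μ)
        ≤ ∫ ω, (1 / (N:ℝ)) * ∑ i : Fin N, ‖c i ω‖ ^ 2 ∂μ := integral_mono hFi hGi key
      _ = (1 / (N:ℝ)) * ∑ i : Fin N, ∫ ω, ‖c i ω‖ ^ 2 ∂μ := by
        rw [integral_const_mul, integral_finset_sum _ fun i _ => hci i]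
  have hint_le4 : ∀ i, (∫ ω, ‖c i ω‖ ^ 2 ∂μ) ≤ 4 := by
    intro i
    calc (∫ ω, ‖c i ω‖ ^ 2 ∂μ) ≤ ∫ _ω, (4:ℝ) ∂μ :=
        integral_mono (hci i) (integrable_const _) fun ω => hcbd i ω
      _ = 4 := by simp
  set S₁ := Finset.univ.filter fun i : Fin N => (δ : ℤ) < |(i.1 : ℤ) - ((h i).1 : ℤ)| with hS₁
  set S₂ := Finset.univ.filter fun i : Fin N => |(i.1 : ℤ) - ((h i).1 : ℤ)| ≤ (δ : ℤ) with hS₂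
  have hsplit : ∑ i : Fin N, ∫ ω, ‖c i ω‖ ^ 2 ∂μ
      = (∑ i ∈ S₁, ∫ ω, ‖c i ω‖ ^ 2 ∂μ) + ∑ i ∈ S₂, ∫ ω, ‖c i ω‖ ^ 2 ∂μ := by
    rw [hS₁, hS₂]
    rw [← Finset.sum_filter_add_sum_filter_not Finset.univ
      (fun i : Fin N => (δ : ℤ) < |(i.1 : ℤ) - ((h i).1 : ℤ)|)]
    congr 1
    apply Finset.sum_congr _ fun _ _ => rfl
    apply Finset.filter_congr
    intro i _
    simp [not_lt]
  have hS1bd : (∑ i ∈ S₁, ∫ ω, ‖c i ω‖ ^ 2 ∂μ) ≤ 4 * (Nδ:ℝ) := by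
    calc (∑ i ∈ S₁, ∫ ω, ‖c i ω‖ ^ 2 ∂μ) ≤ ∑ _i ∈ S₁, (4:ℝ) :=
        Finset.sum_le_sum fun i _ => hint_le4 i
      _ = 4 * (S₁.card : ℝ) := by simp [mul_comm]
      _ ≤ 4 * (Nδ:ℝ) := by
        have : (S₁.card : ℝ) ≤ (Nδ:ℝ) := by exact_mod_cast hgood
        linarith
  have hrw : ∀ i : Fin N, (∫ ω, ‖g (t (h i) ω) - g (t i ω)‖ ^ 2 ∂μ)
      = ∫ ω, ‖c i ω‖ ^ 2 ∂μ := by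
    intro i
    apply integral_congr_ae
    filter_upwards with ω
    rw [hc, norm_sub_rev]
  simp only [hrw]
  calc (∫ ω, ‖dftCoeff N (fun i => g (t i ω)) k
      - dftCoeff N (fun i => g (t (h i) ω)) k‖ ^ 2 ∂μ)
      ≤ (1 / (N:ℝ)) * ((∑ i ∈ S₁, ∫ ω, ‖c i ω‖ ^ 2 ∂μ) + ∑ i ∈ S₂, ∫ ω, ‖c i ω‖ ^ 2 ∂μ) := by
        rw [← hsplit]; exact hmain
    _ ≤ (1 / (N:ℝ)) * (4 * (Nδ:ℝ) + ∑ i ∈ S₂, ∫ ω, ‖c i ω‖ ^ 2 ∂μ) := by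
        apply mul_le_mul_of_nonneg_left (by linarith) (by positivity)
    _ = 4 * (Nδ : ℝ) / N + (1 / (N : ℝ)) * ∑ i ∈ S₂, ∫ ω, ‖c i ω‖ ^ 2 ∂μ := by
        field_simp; try ring
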